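/- If R and R' are positive definite block matrices with top-left blocks X and X' respectively, and R ≥ R' in the Loewner order, then the Schur complements satisfy R/X ≥ R'/X'. -/

import Mathlib

open Matrix

lemma posDef_toBlocks₁₁ {n m : Type*} [Fintype n] [Fintype m]
    {A : Matrix n n ℝ} {B : Matrix n m ℝ} {C : Matrix m n ℝ} {D : Matrix m m ℝ}
    (h : (fromBlocks A B C D).PosDef) : A.PosDef := by
  refine posDef_iff_dotProduct_mulVec.mpr ⟨(isHermitian_fromBlocks_iff.mp h.1).1, fun x hx => ?_⟩
  have := (posDef_iff_dotProduct_mulVec.mp h).2 (x := x ⊕ᵥ 0) (fun hc => hx (funext fun i => congrFun hc (Sum.inl i)))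
  simpa [fromBlocks_mulVec, sumElim_dotProduct_sumElim, Function.star_sumElim] using this

/-- Monotonicity of the Schur complement: if `R ≥ R'` (Loewner order) for positive
definite block matrices `R = [[X,Z],[Zᵀ,Y]]`, `R' = [[X',Z'],[Z'ᵀ,Y']]`, then
`R/X ≥ R'/X'`. -/
theorem schur_complement_mono {n m : Type*} [Fintype n] [Fintype m]
    [DecidableEq n] [DecidableEq m]
    (X X' : Matrix n n ℝ) (Y Y' : Matrix m m ℝ) (Z Z' : Matrix n m ℝ)
    (hR : (fromBlocks X Z Zᵀ Y).PosDef) (hR' : (fromBlocks X' Z' Z'ᵀ Y').PosDef)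
    (hle : ((fromBlocks X Z Zᵀ Y) - (fromBlocks X' Z' Z'ᵀ Y')).PosSemidef) :
    ((Y - Zᵀ * X⁻¹ * Z) - (Y' - Z'ᵀ * X'⁻¹ * Z')).PosSemidef := by
  rw [← conjTranspose_eq_transpose_of_trivial Z] at hR hle ⊢
  rw [← conjTranspose_eq_transpose_of_trivial Z'] at hR' hle ⊢
  have hX : X.PosDef := posDef_toBlocks₁₁ hR
  have hX' : X'.PosDef := posDef_toBlocks₁₁ hR'
  haveI : Invertible X := hX.isUnit.invertible
  haveI : Invertible X' := hX'.isUnit.invertible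
  have hS : (Y - Zᴴ * X⁻¹ * Z).PosSemidef :=
    (PosDef.fromBlocks₁₁ Z Y hX).mp hR.posSemidef
  have hS' : (Y' - Z'ᴴ * X'⁻¹ * Z').PosSemidef :=
    (PosDef.fromBlocks₁₁ Z' Y' hX').mp hR'.posSemidef
  refine posSemidef_iff_dotProduct_mulVec.mpr ⟨hS.1.sub hS'.1, fun v => ?_⟩
  set u : n → ℝ := -((X⁻¹ * Z) *ᵥ v) with hu
  have h1 : star (u ⊕ᵥ v) ⬝ᵥ (fromBlocks X Z Zᴴ Y) *ᵥ (u ⊕ᵥ v)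
      = star v ⬝ᵥ (Y - Zᴴ * X⁻¹ * Z) *ᵥ v := by
    rw [dotProduct_mulVec, schur_complement_eq₁₁ Z Y _ _ hX.1, hu, neg_add_cancel,
      dotProduct_zero, zero_add, dotProduct_mulVec]
  have h2 : star v ⬝ᵥ (Y' - Z'ᴴ * X'⁻¹ * Z') *ᵥ v
      ≤ star (u ⊕ᵥ v) ⬝ᵥ (fromBlocks X' Z' Z'ᴴ Y') *ᵥ (u ⊕ᵥ v) := by
    rw [dotProduct_mulVec (star (u ⊕ᵥ v)), schur_complement_eq₁₁ Z' Y' u v hX'.1,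
      dotProduct_mulVec (star v)]
    have := (posSemidef_iff_dotProduct_mulVec.mp hX'.posSemidef).2 (u + (X'⁻¹ * Z') *ᵥ v)
    rw [dotProduct_mulVec] at this
    linarith
  have h3 := (posSemidef_iff_dotProduct_mulVec.mp hle).2 (u ⊕ᵥ v)
  rw [sub_mulVec, dotProduct_sub] at h3 ⊢
  rw [h1] at h3
  linarith
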